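/- arXiv:0709.1068 — 2 statements merged into one kernel-verified Lean document; each statement's English description precedes it below -/
import Mathlib

section
/- Let n ≥ 3 be an integer and 1 ≤ q ≤ ∞ (so a = (n−1)^{1/q} ≥ 1 and b = 2^{1/q} with 1 ≤ b ≤ 2). Then (a/((a+1)(a+2−b))) · (1 + (1/(n−1)) · a/(a+2−b))^{n−1} < 1. (This is the value φ(R) at R = 1/(2a+2) of the function φ(x) = a x²/((1−(a+1)x)(1−(a+b)x)) · (1 + (1/(n−1)) · ax/(1−(a+b)x))^{n−1}.) -/
open Polynomial Filter Finset Function Metric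

noncomputable section

/-- Weierstrass correction `W_i(z) = f(z_i) / ∏_{j ≠ i} (z_i - z_j)`. -/
def Wc {n : ℕ} (f : Polynomial ℂ) (z : Fin n → ℂ) (i : Fin n) : ℂ :=
  f.eval (z i) / ∏ j ∈ univ.erase i, (z i - z j)

/-- `d_i(z) = min_{j ≠ i} |z_i - z_j|`. -/
def dd {n : ℕ} (z : Fin n → ℂ) (i : Fin n) : ℝ :=
  ⨅ j : {j : Fin n // j ≠ i}, ‖z i - z j.1‖

/-- The `p`-norm on `ℂⁿ` for `p ∈ [1, ∞]`. -/
def pnorm {n : ℕ} (p : ENNReal) (v : Fin n → ℂ) : ℝ :=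
  if p = ⊤ then ⨆ i, ‖v i‖
  else (∑ i, ‖v i‖ ^ p.toReal) ^ (1 / p.toReal)

/-- `E(z) = ‖(W_1(z)/d_1(z), …, W_n(z)/d_n(z))‖_p`. -/
def Ep {n : ℕ} (p : ENNReal) (f : Polynomial ℂ) (z : Fin n → ℂ) : ℝ :=
  pnorm p (fun i => Wc f z i / (dd z i : ℂ))

/-- `a = (n-1)^{1/q}` (with `t^{1/∞} = 1`). -/
def aa (n : ℕ) (q : ENNReal) : ℝ := ((n : ℝ) - 1) ^ (1 / q).toReal

/-- `b = 2^{1/q}` (with `2^{1/∞} = 1`). -/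
def bb (q : ENNReal) : ℝ := (2 : ℝ) ^ (1 / q).toReal

/-- `ξ` is a root-vector of `f` iff `f = ∏ (X - ξᵢ)`. -/
def IsRootVec {n : ℕ} (f : Polynomial ℂ) (ξ : Fin n → ℂ) : Prop :=
  f = ∏ i, (X - Polynomial.C (ξ i))

/-- Denominator in Ehrlich's iteration function. -/
def ehrlichDen {n : ℕ} (f : Polynomial ℂ) (z : Fin n → ℂ) (i : Fin n) : ℂ :=
  1 + ∑ j ∈ univ.erase i, Wc f z j / (z i - z j)

/-- Ehrlich's iteration function. -/
def ehrlichF {n : ℕ} (f : Polynomial ℂ) (z : Fin n → ℂ) : Fin n → ℂ :=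
  fun i => z i - Wc f z i / ehrlichDen f z i

/-- Ehrlich's iterative sequence `z^{k+1} = F(z^k)`. -/
def EhrlichSeq {n : ℕ} (f : Polynomial ℂ) (z0 : Fin n → ℂ) (k : ℕ) : Fin n → ℂ :=
  (ehrlichF f)^[k] z0

/-- Well-definedness of Ehrlich's sequence: every iterate has pairwise distinct
components and all denominators are nonzero. -/
def EhrlichWellDef {n : ℕ} (f : Polynomial ℂ) (z0 : Fin n → ℂ) : Prop :=
  ∀ k : ℕ, Function.Injective (EhrlichSeq f z0 k) ∧
    ∀ i, ehrlichDen f (EhrlichSeq f z0 k) i ≠ 0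

/-- Denominator in Nourein's iteration function. -/
def noureinDen {n : ℕ} (f : Polynomial ℂ) (z : Fin n → ℂ) (i : Fin n) : ℂ :=
  1 + ∑ j ∈ univ.erase i, Wc f z j / (z i - z j - Wc f z i)

/-- Nourein's iteration function. -/
def noureinG {n : ℕ} (f : Polynomial ℂ) (z : Fin n → ℂ) : Fin n → ℂ :=
  fun i => z i - Wc f z i / noureinDen f z i

/-- Nourein's iterative sequence `z^{k+1} = G(z^k)`. -/
def NoureinSeq {n : ℕ} (f : Polynomial ℂ) (z0 : Fin n → ℂ) (k : ℕ) : Fin n → ℂ :=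
  (noureinG f)^[k] z0

/-- Well-definedness of Nourein's sequence. -/
def NoureinWellDef {n : ℕ} (f : Polynomial ℂ) (z0 : Fin n → ℂ) : Prop :=
  ∀ k : ℕ, Function.Injective (NoureinSeq f z0 k) ∧
    ∀ i, noureinDen f (NoureinSeq f z0 k) i ≠ 0

/-- The function `φ` of Theorem 2.1 (localization theorem). -/
def phiW (n : ℕ) (p q : ENNReal) (x : ℝ) : ℝ :=
  aa n q * x / ((1 - x) * (1 - bb q * x)) *
    (1 + x / (((n : ℝ) - 1) ^ (1 / p).toReal * (1 - bb q * x))) ^ (n - 1)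

/-- The function `φ` of the Ehrlich convergence theorem. -/
def phiE (n : ℕ) (q : ENNReal) (x : ℝ) : ℝ :=
  aa n q * x ^ 2 / ((1 - (aa n q + 1) * x) * (1 - (aa n q + bb q) * x)) *
    (1 + (1 / ((n : ℝ) - 1)) * (aa n q * x / (1 - (aa n q + bb q) * x))) ^ (n - 1)

/-- The function `ψ` of the Ehrlich convergence theorem. -/
def psiE (n : ℕ) (q : ENNReal) (x : ℝ) : ℝ :=
  (1 - (aa n q + bb q) * x) / (1 - aa n q * x)

/-- The function `μ` of the Ehrlich convergence theorem. -/
def muE (n : ℕ) (q : ENNReal) (x : ℝ) : ℝ := 1 / (1 - aa n q * x)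

/-- The function `φ` of the Nourein convergence theorem (with `m = a + b + 1`). -/
def phiN (n : ℕ) (q : ENNReal) (x : ℝ) : ℝ :=
  aa n q ^ 2 * x ^ 3 /
      ((1 - (aa n q + bb q + 1) * x + bb q * x ^ 2) * (1 - (aa n q + 2) * x + x ^ 2)) *
    (1 + (1 / ((n : ℝ) - 1)) *
        (aa n q * (x - x ^ 2) / (1 - (aa n q + bb q + 1) * x + bb q * x ^ 2))) ^ (n - 1)

/-- The function `ψ` of the Nourein convergence theorem. -/
def psiN (n : ℕ) (q : ENNReal) (x : ℝ) : ℝ :=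
  (1 - (aa n q + bb q + 1) * x + bb q * x ^ 2) / (1 - (aa n q + 1) * x)

/-- The function `μ` of the Nourein convergence theorem. -/
def muN (n : ℕ) (q : ENNReal) (x : ℝ) : ℝ := (1 - x) / (1 - (aa n q + 1) * x)

theorem stmt_8 (n : ℕ) (hn : 3 ≤ n) (q : ENNReal) (hq : 1 ≤ q) :
    aa n q / ((aa n q + 1) * (aa n q + 2 - bb q)) *
      (1 + (1 / ((n : ℝ) - 1)) * (aa n q / (aa n q + 2 - bb q))) ^ (n - 1) < 1 := by
  set A := aa n q with hA
  set B := bb q with hB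
  set t := (1/q).toReal with ht
  have hn2 : (2 : ℝ) ≤ (n : ℝ) - 1 := by
    have : (3 : ℝ) ≤ (n : ℝ) := by exact_mod_cast hn
    linarith
  have ht0 : 0 ≤ t := ENNReal.toReal_nonneg
  have ht1 : t ≤ 1 := by
    rw [ht]
    have h1q : 1 / q ≤ 1 := by
      rw [one_div]
      simpa using ENNReal.inv_le_inv.mpr hq
    calc (1/q).toReal ≤ (1 : ENNReal).toReal := ENNReal.toReal_mono ENNReal.one_ne_top h1q
      _ = 1 := by simp
  have hA1 : 1 ≤ A := by
    rw [hA, aa]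
    exact Real.one_le_rpow (by linarith) ht0
  have hB1 : 1 ≤ B := by
    rw [hB, bb]
    exact Real.one_le_rpow one_le_two ht0
  have hB2 : B ≤ 2 := by
    rw [hB, bb]
    calc (2:ℝ) ^ t ≤ (2:ℝ) ^ (1:ℝ) := Real.rpow_le_rpow_of_exponent_le one_le_two ht1
      _ = 2 := Real.rpow_one 2
  have hBA : B ≤ A := by
    rw [hA, hB, aa, bb]
    exact Real.rpow_le_rpow (by norm_num) hn2 ht0
  set D := A + 2 - B with hD
  have hD2 : 2 ≤ D := by rw [hD]; linarith
  have hDA : A ≤ D := by rw [hD]; linarith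
  have hDpos : 0 < D := by linarith
  have hApos : 0 < A := by linarith
  -- first factor ≤ 1/3
  have h1 : A / ((A + 1) * D) ≤ 1 / 3 := by
    rw [div_le_div_iff₀ (by positivity) (by norm_num)]
    nlinarith [mul_nonneg (sub_nonneg.mpr hDA) (sub_nonneg.mpr hA1), sq_nonneg (A - 2)]
  -- second factor < 3
  set c := A / D with hc
  have hc0 : 0 ≤ c := by positivity
  have hc1 : c ≤ 1 := by rw [hc, div_le_one hDpos]; exact hDA
  set x := 1 / ((n : ℝ) - 1) * c with hx
  have hx0 : 0 ≤ x := by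
    apply mul_nonneg _ hc0
    positivity
  have hcast : ((n - 1 : ℕ) : ℝ) = (n : ℝ) - 1 := by
    have : 1 ≤ n := by omega
    push_cast [this]
    ring
  have h2 : (1 + x) ^ (n - 1) < 3 := by
    have hle : (1 + x) ^ (n - 1) ≤ Real.exp x ^ (n - 1) := by
      apply pow_le_pow_left₀ (by linarith)
      linarith [Real.add_one_le_exp x]
    have hexp : Real.exp x ^ (n - 1) = Real.exp (((n - 1 : ℕ) : ℝ) * x) := by
      rw [← Real.exp_nat_mul]
    have hxc : ((n - 1 : ℕ) : ℝ) * x = c := by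
      rw [hcast, hx]
      field_simp
    have : Real.exp x ^ (n - 1) ≤ Real.exp 1 := by
      rw [hexp, hxc]
      exact Real.exp_le_exp.mpr hc1
    have he : Real.exp 1 < 3 := by
      linarith [Real.exp_one_lt_d9]
    linarith
  have hpow0 : 0 ≤ (1 + x) ^ (n - 1) := by positivity
  calc A / ((A + 1) * D) * (1 + x) ^ (n - 1)
      ≤ 1 / 3 * (1 + x) ^ (n - 1) := mul_le_mul_of_nonneg_right h1 hpow0
    _ < 1 / 3 * 3 := by linarith
    _ = 1 := by norm_num

end
end

section
/- Let n ≥ 3 be an integer and 1 ≤ q ≤ ∞, and set a = (n−1)^{1/q} and b = 2^{1/q} (so 1 ≤ b ≤ 2 and b ≤ a). Then (2a²(a+1)) / ((2(a+1)² − (2a+1)b)(2a² + 2a + 1)) · (1 + (1/(n−1)) · a(2a+1)/(2(a+1)² − (2a+1)b))^{n−1} < 1. (This is the value φ(R) at R = 1/(2a+2) of the Nourein function φ(x) = a² x³/((1 − mx + bx²)(1 − (a+2)x + x²)) · (1 + (1/(n−1)) · a(x − x²)/(1 − mx + bx²))^{n−1} with m = a + b + 1.) -/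
open Polynomial Filter Finset Function Metric

noncomputable section

lemma exp_54_lt : Real.exp (5/4) < 13/3 := by
  have h4 : Real.exp (5/4) ^ 4 = Real.exp 5 := by
    rw [← Real.exp_nat_mul]; norm_num
  have h5 : Real.exp 5 = Real.exp 1 ^ 5 := by
    rw [← Real.exp_nat_mul]; norm_num
  have h1 : Real.exp 1 ^ 5 < (2.7182818286 : ℝ) ^ 5 :=
    pow_lt_pow_left₀ Real.exp_one_lt_d9 (Real.exp_pos 1).le (by norm_num)
  have : Real.exp (5/4) ^ 4 < (13/3 : ℝ) ^ 4 := by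
    rw [h4, h5]; nlinarith [h1]
  exact lt_of_pow_lt_pow_left₀ 4 (by norm_num) this

lemma key_ineq (a b N : ℝ) (m : ℕ) (ha : 1 ≤ a) (hb1 : 1 ≤ b) (hb2 : b ≤ 2)
    (hba : b ≤ a) (hN : 2 ≤ N) (hm : (m : ℝ) = N) :
    2 * a ^ 2 * (a + 1) /
        ((2 * (a + 1) ^ 2 - (2 * a + 1) * b) * (2 * a ^ 2 + 2 * a + 1)) *
      (1 + (1 / N) * (a * (2 * a + 1) / (2 * (a + 1) ^ 2 - (2 * a + 1) * b))) ^ m < 1 := by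
  set D : ℝ := 2 * (a + 1) ^ 2 - (2 * a + 1) * b with hDdef
  have hab : 0 ≤ (2 * a + 1) * (a - b) := by nlinarith
  have hD : 0 < D := by nlinarith
  have hD2 : 0 < 2 * a ^ 2 + 2 * a + 1 := by nlinarith
  set c : ℝ := a * (2 * a + 1) / D with hcdef
  have hc0 : 0 ≤ c := div_nonneg (by nlinarith) hD.le
  have hc : c ≤ 5 / 4 := by
    rw [hcdef, div_le_iff₀ hD]
    rcases le_total a 2 with h | h
    · nlinarith [mul_nonneg (by linarith : (0:ℝ) ≤ 2 - a) (by linarith : (0:ℝ) ≤ 8*a + 5)]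
    · nlinarith [mul_nonneg (by linarith : (0:ℝ) ≤ 2*a + 1) (by linarith : (0:ℝ) ≤ 2 - b),
        mul_nonneg (by linarith : (0:ℝ) ≤ a) (by linarith : (0:ℝ) ≤ a - 2)]
  have hF1 : 2 * a ^ 2 * (a + 1) / (D * (2 * a ^ 2 + 2 * a + 1)) ≤ 3 / 13 := by
    rw [div_le_div_iff₀ (mul_pos hD hD2) (by norm_num)]
    rcases le_total a 2 with h | h
    · nlinarith [mul_nonneg hab hD2.le,
        mul_nonneg (by linarith : (0:ℝ) ≤ 2 - a)
          (by nlinarith : (0:ℝ) ≤ 8*a^2 + 12*a + 3)]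
    · nlinarith [mul_nonneg (mul_nonneg (by linarith : (0:ℝ) ≤ 2*a + 1)
          (by linarith : (0:ℝ) ≤ 2 - b)) hD2.le,
        mul_nonneg (mul_nonneg (sq_nonneg a) (by linarith : (0:ℝ) ≤ a - 2))
          (by linarith : (0:ℝ) ≤ 6*a + 5)]
  have hN0 : N ≠ 0 := by linarith
  have hx0 : 0 ≤ (1 / N) * c := mul_nonneg (by positivity) hc0
  have hP : (1 + (1 / N) * c) ^ m ≤ Real.exp (5/4) := by
    calc (1 + (1 / N) * c) ^ m ≤ Real.exp ((1 / N) * c) ^ m :=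
          pow_le_pow_left₀ (by linarith : (0:ℝ) ≤ 1 + (1 / N) * c) (by linarith [Real.add_one_le_exp ((1 / N) * c)]) m
      _ = Real.exp ((m : ℝ) * ((1 / N) * c)) := (Real.exp_nat_mul _ m).symm
      _ = Real.exp c := by rw [hm]; field_simp
      _ ≤ Real.exp (5/4) := Real.exp_le_exp.mpr hc
  have hPnn : 0 ≤ (1 + (1 / N) * c) ^ m := pow_nonneg (by linarith) m
  calc 2 * a ^ 2 * (a + 1) / (D * (2 * a ^ 2 + 2 * a + 1)) * (1 + (1 / N) * c) ^ m
      ≤ 3 / 13 * (1 + (1 / N) * c) ^ m := mul_le_mul_of_nonneg_right hF1 hPnn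
    _ ≤ 3 / 13 * Real.exp (5/4) := by nlinarith
    _ < 3 / 13 * (13 / 3) := by nlinarith [exp_54_lt]
    _ = 1 := by norm_num

theorem stmt_18 (n : ℕ) (hn : 3 ≤ n) (q : ENNReal) (hq : 1 ≤ q) :
    2 * aa n q ^ 2 * (aa n q + 1) /
        ((2 * (aa n q + 1) ^ 2 - (2 * aa n q + 1) * bb q) * (2 * aa n q ^ 2 + 2 * aa n q + 1)) *
      (1 + (1 / ((n : ℝ) - 1)) *
          (aa n q * (2 * aa n q + 1) / (2 * (aa n q + 1) ^ 2 - (2 * aa n q + 1) * bb q))) ^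
        (n - 1) < 1 := by
  have ht0 : 0 ≤ (1 / q).toReal := ENNReal.toReal_nonneg
  have ht1 : (1 / q).toReal ≤ 1 := by
    have h : 1 / q ≤ 1 := by
      rw [one_div]
      exact ENNReal.inv_le_one.mpr hq
    simpa using ENNReal.toReal_mono (by norm_num) h
  have hn2 : (2 : ℝ) ≤ (n : ℝ) - 1 := by
    have : (3 : ℝ) ≤ (n : ℝ) := by exact_mod_cast hn
    linarith
  have ha : 1 ≤ aa n q := by
    have := Real.rpow_le_rpow (by norm_num : (0:ℝ) ≤ 1) (by linarith : (1:ℝ) ≤ (n:ℝ) - 1) ht0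
    simpa [aa, Real.one_rpow] using this
  have hb1 : 1 ≤ bb q := by
    have := Real.rpow_le_rpow (by norm_num : (0:ℝ) ≤ 1) (by norm_num : (1:ℝ) ≤ 2) ht0
    simpa [bb, Real.one_rpow] using this
  have hb2 : bb q ≤ 2 := by
    have := Real.rpow_le_rpow_of_exponent_le (by norm_num : (1:ℝ) ≤ 2) ht1
    simpa [bb, Real.rpow_one] using this
  have hba : bb q ≤ aa n q :=
    Real.rpow_le_rpow (by norm_num : (0:ℝ) ≤ 2) hn2 ht0
  have hm : ((n - 1 : ℕ) : ℝ) = (n : ℝ) - 1 := by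
    have : 1 ≤ n := by omega
    push_cast [this]
    ring
  exact key_ineq (aa n q) (bb q) ((n : ℝ) - 1) (n - 1) ha hb1 hb2 hba hn2 hm

end
end
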